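/- Let r and ω be positive integers, let a ∈ ℝ and b ∈ ℝ^r, and let p : ℝ^r → ℝ be a homogeneous polynomial of degree ω whose vector of monomial coefficients has Euclidean norm 1 (i.e., writing p(x) = Σ_{|α|=ω} c_α x^α, one has Σ_α c_α² = 1). Then Var_{g∼N(0,I_r)}[p(a·g + b)] ≥ a^{2ω} / ω^{ω/2}, where Var[X] = E[X²] − (E[X])². -/

import Mathlib

open MeasureTheory ProbabilityTheory

namespace VGPS
open Polynomial Real
open scoped NNReal ENNReal


noncomputable def G (x : ℝ) : ℝ := Real.exp (-x^2/2)

lemma pdf_eq (x : ℝ) : gaussianPDFReal 0 1 x = (Real.sqrt (2*π))⁻¹ * G x := by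
  rw [gaussianPDFReal]
  norm_num [G]

lemma integral_gauss_eq (f : ℝ → ℝ) :
    ∫ x, f x ∂(gaussianReal 0 1) = ∫ x, gaussianPDFReal 0 1 x * f x := by
  rw [gaussianReal_of_var_ne_zero 0 one_ne_zero, gaussianPDF_def]
  have h : (fun x => ENNReal.ofReal (gaussianPDFReal 0 1 x))
      = fun x => ((Real.toNNReal (gaussianPDFReal 0 1 x) : ℝ≥0) : ℝ≥0∞) := rfl
  rw [h, integral_withDensity_eq_integral_smul ((measurable_gaussianPDFReal 0 1).real_toNNReal) f]
  congr 1; funext x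
  simp [NNReal.smul_def, Real.coe_toNNReal _ (gaussianPDFReal_nonneg 0 1 x)]

lemma integrable_gauss_iff (f : ℝ → ℝ) :
    Integrable f (gaussianReal 0 1) ↔ Integrable (fun x => gaussianPDFReal 0 1 x * f x) := by
  rw [gaussianReal_of_var_ne_zero 0 one_ne_zero, gaussianPDF_def]
  have h : (fun x => ENNReal.ofReal (gaussianPDFReal 0 1 x))
      = fun x => ((Real.toNNReal (gaussianPDFReal 0 1 x) : ℝ≥0) : ℝ≥0∞) := rfl
  rw [h, integrable_withDensity_iff_integrable_smul ((measurable_gaussianPDFReal 0 1).real_toNNReal)]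
  apply integrable_congr
  filter_upwards with x
  simp [NNReal.smul_def, Real.coe_toNNReal _ (gaussianPDFReal_nonneg 0 1 x)]

lemma integrable_pow_G (n : ℕ) : Integrable (fun x : ℝ => x ^ n * G x) := by
  have h := integrable_rpow_mul_exp_neg_mul_sq (b := (1:ℝ)/2) (by norm_num) (s := (n:ℝ))
    (by have : (0:ℝ) ≤ n := Nat.cast_nonneg n; linarith)
  simp_rw [Real.rpow_natCast] at h
  have he : ∀ x : ℝ, Real.exp (-(1/2) * x^2) = G x := by
    intro x; rw [G]; ring_nf
  simp_rw [he] at h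
  exact h

lemma integrable_poly_G (P : Polynomial ℝ) : Integrable (fun x : ℝ => P.eval x * G x) := by
  have h : (fun x : ℝ => P.eval x * G x)
      = fun x => ∑ i ∈ Finset.range (P.natDegree + 1), P.coeff i * (x ^ i * G x) := by
    funext x
    rw [eval_eq_sum_range, Finset.sum_mul]
    congr 1 with i; ring
  rw [h]
  exact integrable_finset_sum _ fun i _ => (integrable_pow_G i).const_mul _

lemma integrable_polyeval (P : Polynomial ℝ) :
    Integrable (fun x => P.eval x) (gaussianReal 0 1) := by
  rw [integrable_gauss_iff]
  have h : (fun x => gaussianPDFReal 0 1 x * P.eval x)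
      = fun x => (Real.sqrt (2*π))⁻¹ * (P.eval x * G x) := by
    funext x; rw [pdf_eq]; ring
  rw [h]
  exact (integrable_poly_G P).const_mul _

lemma integral_polyeval_eq (P : Polynomial ℝ) :
    ∫ x, P.eval x ∂(gaussianReal 0 1) = (Real.sqrt (2*π))⁻¹ * ∫ x, P.eval x * G x := by
  rw [integral_gauss_eq, ← integral_const_mul]
  congr 1 with x; rw [pdf_eq]; ring




noncomputable def Hr (n : ℕ) : Polynomial ℝ := (hermite n).map (Int.castRingHom ℝ)

lemma Hr_succ (n : ℕ) : Hr (n+1) = X * Hr n - derivative (Hr n) := by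
  rw [Hr, hermite_succ]
  simp [Hr, Polynomial.derivative_map]

lemma natDegree_Hr (n : ℕ) : (Hr n).natDegree = n := by
  rw [Hr, (hermite_monic n).natDegree_map, natDegree_hermite]

lemma coeff_Hr_self (n : ℕ) : (Hr n).coeff n = 1 := by
  rw [Hr, coeff_map, coeff_hermite_self]; simp

lemma hasDerivAt_HG (n : ℕ) (x : ℝ) :
    HasDerivAt (fun x => (Hr n).eval x * G x) (-((Hr (n+1)).eval x * G x)) x := by
  have hg : HasDerivAt (fun x : ℝ => -x^2/2) (-x) x := by
    have h := ((hasDerivAt_pow 2 x).neg).div_const 2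
    refine h.congr_deriv ?_
    simp; ring
  have hG : HasDerivAt G (-x * G x) x := by
    have := hg.exp
    unfold G; simpa [mul_comm] using this
  have hP : HasDerivAt (fun x => (Hr n).eval x) ((derivative (Hr n)).eval x) x :=
    Polynomial.hasDerivAt _ x
  have h := hP.mul hG
  refine h.congr_deriv ?_
  rw [Hr_succ]
  simp only [eval_sub, eval_mul, eval_X]
  ring

lemma integrable_monpoly (k : ℕ) (P : Polynomial ℝ) :
    Integrable (fun x : ℝ => x ^ k * (P.eval x * G x)) := by
  have h := integrable_poly_G (X ^ k * P)
  have e : (fun x : ℝ => (X ^ k * P).eval x * G x) = fun x : ℝ => x ^ k * (P.eval x * G x) := by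
    funext x; simp [eval_mul, eval_pow]; ring
  rwa [e] at h

lemma Jv_succ_succ (m n : ℕ) :
    ∫ x : ℝ, x ^ (m+1) * ((Hr (n+1)).eval x * G x)
      = (m+1 : ℝ) * ∫ x : ℝ, x ^ m * ((Hr n).eval x * G x) := by
  have hu : ∀ x : ℝ, HasDerivAt (fun x : ℝ => x ^ (m+1)) ((m+1 : ℝ) * x ^ m) x := by
    intro x
    simpa using hasDerivAt_pow (m+1) x
  have hv := hasDerivAt_HG n
  have h1 : Integrable ((fun x : ℝ => x ^ (m+1)) * fun x => -((Hr (n+1)).eval x * G x)) := by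
    have := (integrable_monpoly (m+1) (Hr (n+1))).neg
    apply this.congr
    filter_upwards with x
    simp only [Pi.mul_apply, Pi.neg_apply]; ring
  have h2 : Integrable ((fun x : ℝ => (m+1 : ℝ) * x ^ m) * fun x => (Hr n).eval x * G x) := by
    have := (integrable_monpoly m (Hr n)).const_mul (m+1 : ℝ)
    apply this.congr
    filter_upwards with x
    simp only [Pi.mul_apply, Pi.neg_apply]; ring
  have h3 : Integrable ((fun x : ℝ => x ^ (m+1)) * fun x => (Hr n).eval x * G x) := by
    have := integrable_monpoly (m+1) (Hr n)
    apply this.congr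
    filter_upwards with x
    simp [Pi.mul_apply]
  have key := integral_mul_deriv_eq_deriv_mul_of_integrable (fun x _ => hu x) (fun x _ => hv x) h1 h2 h3
  have l1 : ∫ x : ℝ, x ^ (m+1) * -((Hr (n+1)).eval x * G x)
      = -∫ x : ℝ, x ^ (m+1) * ((Hr (n+1)).eval x * G x) := by
    rw [← integral_neg]; congr 1 with x; ring
  have l2 : ∫ x : ℝ, (m+1 : ℝ) * x ^ m * ((Hr n).eval x * G x)
      = (m+1 : ℝ) * ∫ x : ℝ, x ^ m * ((Hr n).eval x * G x) := by
    rw [← integral_const_mul]; congr 1 with x; ring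
  rw [l1, l2] at key
  linarith [key]

lemma Jv_zero_succ (n : ℕ) :
    (∫ x : ℝ, x ^ 0 * ((Hr (n+1)).eval x * G x)) = 0 := by
  have hu : ∀ x : ℝ, HasDerivAt (fun _ : ℝ => (1:ℝ)) ((0:ℝ)) x := fun x => hasDerivAt_const x 1
  have hv := hasDerivAt_HG n
  have h1 : Integrable ((fun _ : ℝ => (1:ℝ)) * fun x => -((Hr (n+1)).eval x * G x)) := by
    have := (integrable_poly_G (Hr (n+1))).neg
    apply this.congr
    filter_upwards with x
    simp [Pi.mul_apply]
  have h2 : Integrable ((fun _ : ℝ => (0:ℝ)) * fun x => (Hr n).eval x * G x) := by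
    apply (integrable_zero ℝ ℝ (volume : Measure ℝ)).congr
    filter_upwards with x
    simp [Pi.mul_apply]
  have h3 : Integrable ((fun _ : ℝ => (1:ℝ)) * fun x => (Hr n).eval x * G x) := by
    have := integrable_poly_G (Hr n)
    apply this.congr
    filter_upwards with x
    simp [Pi.mul_apply]
  have key := integral_mul_deriv_eq_deriv_mul_of_integrable (fun x _ => hu x) (fun x _ => hv x) h1 h2 h3
  simp only [one_mul, zero_mul, integral_zero, neg_zero] at key
  have l1 : ∫ x : ℝ, -((Hr (n+1)).eval x * G x)
      = -∫ x : ℝ, (Hr (n+1)).eval x * G x := by rw [← integral_neg]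
  rw [l1] at key
  simp only [pow_zero, one_mul]
  linarith [key]

noncomputable def J (m n : ℕ) : ℝ := ∫ x, x ^ m * (Hr n).eval x ∂(gaussianReal 0 1)

lemma J_eq (m n : ℕ) : J m n = (Real.sqrt (2*π))⁻¹ * ∫ x : ℝ, x ^ m * ((Hr n).eval x * G x) := by
  rw [J]
  have e1 : (fun x : ℝ => x ^ m * (Hr n).eval x) = fun x => (X ^ m * Hr n).eval x := by
    funext x; simp [eval_mul, eval_pow]
  rw [e1, integral_polyeval_eq]
  congr 1
  congr 1 with x
  simp [eval_mul, eval_pow]; ring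

lemma J_zero_zero : J 0 0 = 1 := by
  rw [J]
  have : (fun x : ℝ => x ^ 0 * (Hr 0).eval x) = fun _ => (1:ℝ) := by
    funext x; simp [Hr, hermite_zero]
  rw [this]
  simp

lemma J_zero_succ (n : ℕ) : J 0 (n+1) = 0 := by
  rw [J_eq, Jv_zero_succ, mul_zero]

lemma J_succ_succ (m n : ℕ) : J (m+1) (n+1) = (m+1 : ℝ) * J m n := by
  rw [J_eq, J_eq, Jv_succ_succ]; ring

lemma J_lt {m n : ℕ} (h : m < n) : J m n = 0 := by
  induction m generalizing n with
  | zero =>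
    obtain ⟨k, rfl⟩ : ∃ k, n = k + 1 := ⟨n - 1, by omega⟩
    exact J_zero_succ k
  | succ m ih =>
    obtain ⟨k, rfl⟩ : ∃ k, n = k + 1 := ⟨n - 1, by omega⟩
    rw [J_succ_succ, ih (by omega), mul_zero]

lemma J_diag (n : ℕ) : J n n = (n.factorial : ℝ) := by
  induction n with
  | zero => simpa using J_zero_zero
  | succ n ih =>
    rw [J_succ_succ, ih, Nat.factorial_succ]
    push_cast; ring

lemma integrable_mon_H (k n : ℕ) :
    Integrable (fun x => x ^ k * (Hr n).eval x) (gaussianReal 0 1) := by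
  have := integrable_polyeval (X ^ k * Hr n)
  apply this.congr
  filter_upwards with x
  simp [eval_mul, eval_pow]

lemma HH_eval_expand (m n : ℕ) :
    ∫ x, (Hr m).eval x * (Hr n).eval x ∂(gaussianReal 0 1)
      = ∑ k ∈ Finset.range (m+1), (Hr m).coeff k * J k n := by
  have e : (fun x => (Hr m).eval x * (Hr n).eval x)
      = fun x => ∑ k ∈ Finset.range (m+1), (Hr m).coeff k * (x ^ k * (Hr n).eval x) := by
    funext x
    have hs : (Hr m).eval x = ∑ k ∈ Finset.range (m+1), (Hr m).coeff k * x ^ k := by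
      have h := eval_eq_sum_range (p := Hr m) x
      rwa [natDegree_Hr] at h
    rw [hs, Finset.sum_mul]
    congr 1 with k; ring
  rw [e, integral_finset_sum]
  · congr 1 with k
    rw [integral_const_mul, J]
  · intro k _
    exact (integrable_mon_H k n).const_mul _

lemma HH_lt {m n : ℕ} (h : m < n) :
    ∫ x, (Hr m).eval x * (Hr n).eval x ∂(gaussianReal 0 1) = 0 := by
  rw [HH_eval_expand]
  apply Finset.sum_eq_zero
  intro k hk
  rw [J_lt (by simp at hk; omega), mul_zero]

lemma HH_diag (n : ℕ) :
    ∫ x, (Hr n).eval x * (Hr n).eval x ∂(gaussianReal 0 1) = (n.factorial : ℝ) := by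
  rw [HH_eval_expand, Finset.sum_range_succ, coeff_Hr_self, one_mul, J_diag]
  have : ∑ k ∈ Finset.range n, (Hr n).coeff k * J k n = 0 := by
    apply Finset.sum_eq_zero
    intro k hk
    rw [J_lt (by simp at hk; omega), mul_zero]
  rw [this, zero_add]




theorem integrable_pi_prod {μ : Measure ℝ} [SigmaFinite μ] :
    ∀ {n : ℕ} (f : Fin n → ℝ → ℝ), (∀ i, Integrable (f i) μ) →
      Integrable (fun x : Fin n → ℝ => ∏ i, f i (x i)) (Measure.pi fun _ => μ) := by
  intro n
  induction n with
  | zero =>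
    intro f _
    simp only [Finset.univ_eq_empty, Finset.prod_empty]
    have : IsProbabilityMeasure (Measure.pi fun _ : Fin 0 => μ) := by
      constructor
      rw [Measure.pi_univ]
      simp
    exact integrable_const 1
  | succ n ih =>
    intro f hf
    have h := (measurePreserving_piFinSuccAbove (fun _ : Fin (n+1) => μ) 0).symm
    rw [← h.integrable_comp_emb (MeasurableEquiv.measurableEmbedding _)]
    have hint : Integrable (fun (x : ℝ × (Fin n → ℝ)) => f 0 x.1 * ∏ j, f (Fin.succ j) (x.2 j))
        (μ.prod (Measure.pi fun _ => μ)) :=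
      (hf 0).mul_prod (ih (fun j => f (Fin.succ j)) (fun j => hf _))
    apply hint.congr
    filter_upwards with x
    simp only [Function.comp_def, MeasurableEquiv.piFinSuccAbove_symm_apply,
      Fin.insertNthEquiv, Equiv.coe_fn_mk, Fin.insertNth_zero, Fin.prod_univ_succ,
      Fin.cons_zero, Fin.cons_succ, cast_eq]

theorem integral_pi_prod {μ : Measure ℝ} [SigmaFinite μ] :
    ∀ {n : ℕ} (f : Fin n → ℝ → ℝ),
      ∫ x : Fin n → ℝ, ∏ i, f i (x i) ∂(Measure.pi fun _ => μ) = ∏ i, ∫ x, f i x ∂μ := by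
  intro n
  induction n with
  | zero =>
    intro f
    simp only [Finset.univ_eq_empty, Finset.prod_empty]
    rw [integral_const]
    rw [measureReal_def, Measure.pi_univ]
    simp
  | succ n ih =>
    intro f
    have h := (measurePreserving_piFinSuccAbove (fun _ : Fin (n+1) => μ) 0).symm
    calc ∫ x : Fin (n+1) → ℝ, ∏ i, f i (x i) ∂(Measure.pi fun _ => μ)
        = ∫ x : ℝ × (Fin n → ℝ), f 0 x.1 * ∏ j, f (Fin.succ j) (x.2 j)
            ∂(μ.prod (Measure.pi fun _ => μ)) := by
          rw [← h.integral_comp']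
          congr 1 with x
          simp only [MeasurableEquiv.piFinSuccAbove_symm_apply,
            Fin.insertNthEquiv, Equiv.coe_fn_mk, Fin.insertNth_zero, Fin.prod_univ_succ,
            Fin.cons_zero, Fin.cons_succ, cast_eq]
      _ = (∫ x, f 0 x ∂μ) * ∏ j : Fin n, ∫ x, f (Fin.succ j) x ∂μ := by
          have key := integral_prod_mul (L := ℝ) (μ := μ) (ν := Measure.pi fun _ : Fin n => μ)
            (f 0) (fun y => ∏ j : Fin n, f (Fin.succ j) (y j))
          rw [key, ih]
      _ = ∏ i, ∫ x, f i x ∂μ := by rw [Fin.prod_univ_succ]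


lemma int_aff_H (a c : ℝ) (m n : ℕ) :
    Integrable (fun x => (a*x+c)^m * (Hr n).eval x) (gaussianReal 0 1) := by
  have h := integrable_polyeval ((Polynomial.C a * X + Polynomial.C c)^m * Hr n)
  apply h.congr
  filter_upwards with x
  simp [eval_mul, eval_pow]

lemma Hr_zero_eval (x : ℝ) : (Hr 0).eval x = 1 := by
  simp [Hr, hermite_zero]

lemma int_aff (a c : ℝ) (m : ℕ) :
    Integrable (fun x => (a*x+c)^m) (gaussianReal 0 1) := by
  apply (int_aff_H a c m 0).congr
  filter_upwards with x
  rw [Hr_zero_eval, mul_one]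

lemma int_aff2 (a c : ℝ) (m m' : ℕ) :
    Integrable (fun x => (a*x+c)^m * (a*x+c)^m') (gaussianReal 0 1) := by
  apply (int_aff a c (m+m')).congr
  filter_upwards with x
  rw [pow_add]

lemma int_H (n : ℕ) : Integrable (fun x => (Hr n).eval x) (gaussianReal 0 1) :=
  integrable_polyeval (Hr n)

lemma int_HH (m n : ℕ) :
    Integrable (fun x => (Hr m).eval x * (Hr n).eval x) (gaussianReal 0 1) := by
  apply (integrable_polyeval (Hr m * Hr n)).congr
  filter_upwards with x
  simp [eval_mul]

lemma K_expand (a c : ℝ) (m n : ℕ) :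
    ∫ x, (a*x+c)^m * (Hr n).eval x ∂(gaussianReal 0 1)
      = ∑ k ∈ Finset.range (m+1), a^k * c^(m-k) * (m.choose k : ℝ) * J k n := by
  have e : (fun x : ℝ => (a*x+c)^m * (Hr n).eval x)
      = fun x => ∑ k ∈ Finset.range (m+1),
          (a^k * c^(m-k) * (m.choose k : ℝ)) * (x^k * (Hr n).eval x) := by
    funext x
    rw [add_pow, Finset.sum_mul]
    congr 1 with k
    rw [mul_pow]
    ring
  rw [e, integral_finset_sum _ (fun k _ => (integrable_mon_H k n).const_mul _)]
  congr 1 with k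
  rw [integral_const_mul]
  simp only [J]

lemma K_lt (a c : ℝ) {m n : ℕ} (h : m < n) :
    ∫ x, (a*x+c)^m * (Hr n).eval x ∂(gaussianReal 0 1) = 0 := by
  rw [K_expand]
  apply Finset.sum_eq_zero
  intro k hk
  rw [J_lt (by simp at hk; omega), mul_zero]

lemma K_diag (a c : ℝ) (n : ℕ) :
    ∫ x, (a*x+c)^n * (Hr n).eval x ∂(gaussianReal 0 1) = a^n * (n.factorial : ℝ) := by
  rw [K_expand, Finset.sum_range_succ]
  have h0 : ∑ k ∈ Finset.range n, a^k * c^(n-k) * (n.choose k : ℝ) * J k n = 0 := by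
    apply Finset.sum_eq_zero
    intro k hk
    rw [J_lt (by simp at hk; omega), mul_zero]
  rw [h0, zero_add, J_diag]
  simp

lemma EH_eq (n : ℕ) : ∫ x, (Hr n).eval x ∂(gaussianReal 0 1) = J 0 n := by
  simp only [J]
  congr 1 with x
  rw [pow_zero, one_mul]


end VGPS


/-- The standard Gaussian measure `N(0, I_r)` on `ℝ^r`, i.e. the product of `r`
copies of the standard one-dimensional Gaussian. -/
noncomputable def gaussianPi (r : ℕ) : Measure (Fin r → ℝ) :=
  Measure.pi fun _ => gaussianReal 0 1

/-- For a homogeneous degree-`ω` polynomial `p` whose coefficient vector has unit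
Euclidean norm, and any `a ∈ ℝ`, `b ∈ ℝ^r`,
`Var_{g∼N(0,I_r)}[p(a·g + b)] ≥ a^{2ω} / ω^{ω/2}`. -/
theorem variance_gaussian_polynomial_shift (r ω : ℕ) (hr : 0 < r) (hω : 0 < ω)
    (a : ℝ) (b : Fin r → ℝ) (p : MvPolynomial (Fin r) ℝ)
    (hp : p.IsHomogeneous ω)
    (hcoef : ∑ α ∈ p.support, MvPolynomial.coeff α p ^ 2 = 1) :
    a ^ (2 * ω) / (ω : ℝ) ^ ((ω : ℝ) / 2)
      ≤ (∫ g, MvPolynomial.eval (fun i => a * g i + b i) p ^ 2 ∂(gaussianPi r))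
          - (∫ g, MvPolynomial.eval (fun i => a * g i + b i) p ∂(gaussianPi r)) ^ 2 := by
  classical
  open VGPS in
  simp only [gaussianPi]
  set μr : Measure (Fin r → ℝ) := Measure.pi fun _ => gaussianReal 0 1 with hμr
  haveI : IsProbabilityMeasure μr := by
    constructor
    rw [hμr, Measure.pi_univ]
    simp
  set F : (Fin r → ℝ) → ℝ := fun g => MvPolynomial.eval (fun i => a * g i + b i) p with hF
  set Hp : (Fin r →₀ ℕ) → (Fin r → ℝ) → ℝ :=
    fun α g => ∏ i, (VGPS.Hr (α i)).eval (g i) with hHp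
  set Y : (Fin r → ℝ) → ℝ :=
    fun g => ∑ α ∈ p.support, MvPolynomial.coeff α p * Hp α g with hY
  -- degree facts
  have hsum : ∀ δ ∈ p.support, ∑ i, δ i = ω := by
    intro δ hδ
    have h1 := hp (MvPolynomial.mem_support_iff.1 hδ)
    change Finsupp.weight (fun _ => 1) δ = ω at h1
    rw [← Finsupp.degree_eq_weight_one] at h1
    rw [← h1, Finsupp.degree]
    exact (Finset.sum_subset (Finset.subset_univ _)
      (fun i _ hi => Finsupp.notMem_support_iff.1 hi)).symm
  have exists_lt : ∀ δ α : Fin r →₀ ℕ, (∑ i, δ i) = ω → (∑ i, α i) = ω → δ ≠ α →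
      ∃ i, δ i < α i := by
    intro δ α h1 h2 hne
    by_contra hc
    push_neg at hc
    apply hne
    ext i
    by_contra hne2
    have hlt : α i < δ i := lt_of_le_of_ne (hc i) (Ne.symm hne2)
    have : ∑ j, α j < ∑ j, δ j :=
      Finset.sum_lt_sum (fun j _ => hc j) ⟨i, Finset.mem_univ i, hlt⟩
    omega
  -- expansion of F
  have hFexp : ∀ g, F g = ∑ δ ∈ p.support,
      MvPolynomial.coeff δ p * ∏ i, (a * g i + b i) ^ δ i := by
    intro g
    rw [hF]
    exact MvPolynomial.eval_eq' _ p
  -- expansions as functions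
  have eFH : ∀ α : Fin r →₀ ℕ, (fun g => F g * Hp α g)
      = fun g => ∑ δ ∈ p.support, MvPolynomial.coeff δ p
          * ∏ i, ((a * g i + b i) ^ δ i * (VGPS.Hr (α i)).eval (g i)) := by
    intro α
    funext g
    rw [hFexp g, Finset.sum_mul]
    congr 1 with δ
    rw [hHp, Finset.prod_mul_distrib]
    ring
  have eHH : ∀ α β : Fin r →₀ ℕ, (fun g => Hp α g * Hp β g)
      = fun g => ∏ i, ((VGPS.Hr (α i)).eval (g i) * (VGPS.Hr (β i)).eval (g i)) := by
    intro α β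
    funext g
    rw [hHp, Finset.prod_mul_distrib]
  have eFF : (fun g => F g * F g)
      = fun g => ∑ δ ∈ p.support, ∑ δ' ∈ p.support,
          (MvPolynomial.coeff δ p * MvPolynomial.coeff δ' p)
          * ∏ i, ((a * g i + b i) ^ δ i * (a * g i + b i) ^ δ' i) := by
    funext g
    rw [hFexp g, Finset.sum_mul_sum]
    congr 1 with δ
    congr 1 with δ'
    rw [Finset.prod_mul_distrib]
    ring
  have eFY : (fun g => F g * Y g)
      = fun g => ∑ α ∈ p.support, MvPolynomial.coeff α p * (F g * Hp α g) := by
    funext g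
    rw [hY, Finset.mul_sum]
    congr 1 with α
    ring
  have eYY : (fun g => Y g * Y g)
      = fun g => ∑ α ∈ p.support, ∑ β ∈ p.support,
          (MvPolynomial.coeff α p * MvPolynomial.coeff β p) * (Hp α g * Hp β g) := by
    funext g
    rw [hY, Finset.sum_mul_sum]
    congr 1 with α
    congr 1 with β
    ring
  -- integrability
  have intHp : ∀ α : Fin r →₀ ℕ, Integrable (Hp α) μr := fun α =>
    integrable_pi_prod _ (fun i => int_H (α i))
  have intF : Integrable F μr := by
    rw [show F = fun g => ∑ δ ∈ p.support,
        MvPolynomial.coeff δ p * ∏ i, (a * g i + b i) ^ δ i from funext hFexp]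
    exact integrable_finset_sum _ fun δ _ =>
      (integrable_pi_prod _ (fun i => int_aff a (b i) (δ i))).const_mul _
  have intY : Integrable Y μr := by
    rw [hY]
    exact integrable_finset_sum _ fun α _ => (intHp α).const_mul _
  have intFHp : ∀ α : Fin r →₀ ℕ, Integrable (fun g => F g * Hp α g) μr := by
    intro α
    rw [eFH α]
    exact integrable_finset_sum _ fun δ _ =>
      (integrable_pi_prod _ (fun i => int_aff_H a (b i) (δ i) (α i))).const_mul _
  have intFY : Integrable (fun g => F g * Y g) μr := by
    rw [eFY]
    exact integrable_finset_sum _ fun α _ => (intFHp α).const_mul _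
  have intHpHp : ∀ α β : Fin r →₀ ℕ, Integrable (fun g => Hp α g * Hp β g) μr := by
    intro α β
    rw [eHH α β]
    exact integrable_pi_prod _ fun i => int_HH (α i) (β i)
  have intYY : Integrable (fun g => Y g * Y g) μr := by
    rw [eYY]
    exact integrable_finset_sum _ fun α _ =>
      integrable_finset_sum _ fun β _ => (intHpHp α β).const_mul _
  have intFF : Integrable (fun g => F g * F g) μr := by
    rw [eFF]
    exact integrable_finset_sum _ fun δ _ =>
      integrable_finset_sum _ fun δ' _ =>
        (integrable_pi_prod _ (fun i => int_aff2 a (b i) (δ i) (δ' i))).const_mul _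
  -- values
  have valFHp : ∀ α ∈ p.support, ∫ g, F g * Hp α g ∂μr
      = MvPolynomial.coeff α p * (a ^ ω * ∏ i, ((α i).factorial : ℝ)) := by
    intro α hα
    rw [eFH α, integral_finset_sum _ (fun δ _ =>
      (integrable_pi_prod _ (fun i => int_aff_H a (b i) (δ i) (α i))).const_mul _)]
    have hterm : ∀ δ ∈ p.support, δ ≠ α →
        MvPolynomial.coeff δ p * ∫ g, ∏ i, ((a * g i + b i) ^ δ i
          * (VGPS.Hr (α i)).eval (g i)) ∂μr = 0 := by
      intro δ hδ hne
      obtain ⟨i, hi⟩ := exists_lt δ α (hsum δ hδ) (hsum α hα) hne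
      have hv := integral_pi_prod (μ := gaussianReal 0 1)
        (f := fun i (y:ℝ) => (a * y + b i) ^ δ i * (VGPS.Hr (α i)).eval y)
      rw [hμr, hv, Finset.prod_eq_zero (Finset.mem_univ i) (K_lt a (b i) hi),
        mul_zero]
    simp_rw [integral_const_mul]
    rw [Finset.sum_eq_single_of_mem α hα (fun δ hδ hne => hterm δ hδ hne)]
    have hv := integral_pi_prod (μ := gaussianReal 0 1)
      (f := fun i (y:ℝ) => (a * y + b i) ^ α i * (VGPS.Hr (α i)).eval y)
    rw [hμr, hv]
    congr 1
    have : ∀ i : Fin r, ∫ x, (a * x + b i) ^ α i * (VGPS.Hr (α i)).eval x ∂(gaussianReal 0 1)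
        = a ^ α i * ((α i).factorial : ℝ) := fun i => K_diag a (b i) (α i)
    rw [Finset.prod_congr rfl (fun i _ => this i), Finset.prod_mul_distrib,
      Finset.prod_pow_eq_pow_sum, hsum α hα]
  have valHp : ∀ α ∈ p.support, ∫ g, Hp α g ∂μr = 0 := by
    intro α hα
    simp only [hHp]
    have hv := integral_pi_prod (μ := gaussianReal 0 1)
      (f := fun i (y:ℝ) => (VGPS.Hr (α i)).eval y)
    rw [hμr, hv]
    have : ∃ i, α i ≠ 0 := by
      by_contra hc
      push_neg at hc
      have : ∑ i, α i = 0 := Finset.sum_eq_zero fun i _ => hc i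
      rw [hsum α hα] at this
      omega
    obtain ⟨i, hi⟩ := this
    apply Finset.prod_eq_zero (Finset.mem_univ i)
    rw [EH_eq]
    obtain ⟨k, hk⟩ : ∃ k, α i = k + 1 := ⟨α i - 1, by omega⟩
    rw [hk, J_zero_succ]
  have valY : ∫ g, Y g ∂μr = 0 := by
    rw [hY, integral_finset_sum _ (fun α _ => (intHp α).const_mul _)]
    apply Finset.sum_eq_zero
    intro α hα
    rw [integral_const_mul, valHp α hα, mul_zero]
  have valHpHp_ne : ∀ α ∈ p.support, ∀ β ∈ p.support, α ≠ β →
      ∫ g, Hp α g * Hp β g ∂μr = 0 := by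
    intro α hα β hβ hne
    rw [eHH α β]
    have hv := integral_pi_prod (μ := gaussianReal 0 1)
      (f := fun i (y:ℝ) => (VGPS.Hr (α i)).eval y * (VGPS.Hr (β i)).eval y)
    rw [hμr, hv]
    obtain ⟨i, hi⟩ := exists_lt α β (hsum α hα) (hsum β hβ) hne
    exact Finset.prod_eq_zero (Finset.mem_univ i) (HH_lt hi)
  have valHpHp_diag : ∀ α : Fin r →₀ ℕ,
      ∫ g, Hp α g * Hp α g ∂μr = ∏ i, ((α i).factorial : ℝ) := by
    intro α
    rw [eHH α α]
    have hv := integral_pi_prod (μ := gaussianReal 0 1)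
      (f := fun i (y:ℝ) => (VGPS.Hr (α i)).eval y * (VGPS.Hr (α i)).eval y)
    rw [hμr, hv]
    exact Finset.prod_congr rfl fun i _ => HH_diag (α i)
  set W : ℝ := ∑ α ∈ p.support, MvPolynomial.coeff α p ^ 2 * ∏ i, ((α i).factorial : ℝ)
    with hW
  have valYY : ∫ g, Y g * Y g ∂μr = W := by
    rw [eYY, integral_finset_sum _ (fun α _ =>
      integrable_finset_sum _ fun β _ => (intHpHp α β).const_mul _)]
    rw [hW]
    apply Finset.sum_congr rfl
    intro α hα
    rw [integral_finset_sum _ (fun β _ => (intHpHp α β).const_mul _)]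
    simp_rw [integral_const_mul]
    rw [Finset.sum_eq_single_of_mem α hα (fun β hβ hne => by
      rw [valHpHp_ne α hα β hβ (Ne.symm hne), mul_zero])]
    rw [valHpHp_diag α]
    ring
  have valFY : ∫ g, F g * Y g ∂μr = a ^ ω * W := by
    rw [eFY, integral_finset_sum _ (fun α _ => (intFHp α).const_mul _)]
    simp_rw [integral_const_mul]
    rw [hW, Finset.mul_sum]
    apply Finset.sum_congr rfl
    intro α hα
    rw [valFHp α hα]
    ring
  -- variance bound
  set m0 : ℝ := ∫ g, F g ∂μr with hm0
  have key : (0:ℝ) ≤ ∫ g, (F g - m0 - a ^ ω * Y g) ^ 2 ∂μr :=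
    integral_nonneg fun g => sq_nonneg _
  have e2 : (fun g => (F g - m0 - a ^ ω * Y g) ^ 2)
      = fun g => (((F g * F g + m0 ^ 2) + (a ^ ω)^2 * (Y g * Y g)) - (2 * m0) * F g
          - (2 * a ^ ω) * (F g * Y g)) + (2 * m0 * a ^ ω) * Y g := by
    funext g
    ring
  have expand : ∫ g, (F g - m0 - a ^ ω * Y g) ^ 2 ∂μr
      = (∫ g, F g * F g ∂μr) - m0 ^ 2 - (a ^ ω) ^ 2 * W := by
    rw [e2]
    have iA := intFF
    have iB : Integrable (fun _ : Fin r → ℝ => m0 ^ 2) μr := integrable_const _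
    have iC := intYY.const_mul ((a ^ ω)^2)
    have iD := intF.const_mul (2 * m0)
    have iE := intFY.const_mul (2 * a ^ ω)
    have iG := intY.const_mul (2 * m0 * a ^ ω)
    have h1 := integral_add iA iB
    have h2 := integral_add (iA.add iB) iC
    have h3 := integral_sub ((iA.add iB).add iC) iD
    have h4 := integral_sub (((iA.add iB).add iC).sub iD) iE
    have h5 := integral_add ((((iA.add iB).add iC).sub iD).sub iE) iG
    simp only [Pi.add_apply, Pi.sub_apply] at h1 h2 h3 h4 h5
    rw [h5, h4, h3, h2, h1, integral_const_mul, integral_const_mul, integral_const_mul, integral_const_mul,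
      valYY, valFY, valY, integral_const]
    simp only [probReal_univ, ENNReal.toReal_one, smul_eq_mul, one_mul, mul_zero, add_zero]
    rw [← hm0]
    ring
  have hyp : (a ^ ω) ^ 2 * W ≤ (∫ g, F g * F g ∂μr) - m0 ^ 2 := by linarith
  -- lower bounds on W
  have hW1 : (1:ℝ) ≤ W := by
    rw [hW, ← hcoef]
    apply Finset.sum_le_sum
    intro α hα
    have h1 : (1:ℝ) ≤ ∏ i, ((α i).factorial : ℝ) := by
      have h := Finset.prod_le_prod (s := Finset.univ) (f := fun _ : Fin r => (1:ℝ))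
        (g := fun i => ((α i).factorial : ℝ)) (fun i _ => zero_le_one)
        (fun i _ => Nat.one_le_cast.mpr (Nat.one_le_iff_ne_zero.mpr (Nat.factorial_ne_zero _)))
      simpa using h
    nlinarith [sq_nonneg (MvPolynomial.coeff α p)]
  have ha2 : (0:ℝ) ≤ a ^ (2 * ω) := by
    rw [mul_comm, pow_mul]
    positivity
  have hpow : a ^ (2 * ω) = (a ^ ω) ^ 2 := by
    rw [mul_comm, pow_mul]
  have hgoal2 : a ^ (2 * ω) ≤ (∫ g, F g * F g ∂μr) - m0 ^ 2 := by
    calc a ^ (2*ω) = a ^ (2*ω) * 1 := by ring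
    _ ≤ a ^ (2*ω) * W := by exact mul_le_mul_of_nonneg_left hW1 ha2
    _ = (a ^ ω) ^ 2 * W := by rw [hpow]
    _ ≤ _ := hyp
  have hrpow : (1:ℝ) ≤ (ω : ℝ) ^ ((ω : ℝ) / 2) :=
    Real.one_le_rpow (by exact_mod_cast hω) (by positivity)
  have hdiv : a ^ (2*ω) / (ω : ℝ) ^ ((ω : ℝ) / 2) ≤ a ^ (2*ω) := div_le_self ha2 hrpow
  have hFF : (∫ g, F g ^ 2 ∂μr) = ∫ g, F g * F g ∂μr := by
    congr 1 with g
    rw [sq]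
  calc a ^ (2*ω) / (ω : ℝ) ^ ((ω : ℝ) / 2) ≤ a ^ (2*ω) := hdiv
    _ ≤ (∫ g, F g * F g ∂μr) - m0 ^ 2 := hgoal2
    _ = (∫ g, F g ^ 2 ∂μr) - (∫ g, F g ∂μr) ^ 2 := by rw [hFF, hm0]
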